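/- arXiv:1107.3174 — 3 statements merged into one kernel-verified Lean document; each statement's English description precedes it below -/
import Mathlib

section
/- Let A be an n×n complex Hurwitz matrix (every eigenvalue of A has negative real part), let Q be an n×n complex positive semidefinite matrix, and let P be an n×n Hermitian matrix satisfying the Lyapunov equation A·P + P·Aᴴ + Q = 0 (where Aᴴ denotes the conjugate transpose). Then P is positive semidefinite. -/
open Matrix
open scoped ComplexOrder

/-- A complex square matrix is Hurwitz if every eigenvalue (i.e. every element of its
spectrum) has strictly negative real part. -/
def Matrix.IsHurwitz {n : Type*} [Fintype n] [DecidableEq n] (A : Matrix n n ℂ) : Prop :=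
  ∀ μ ∈ spectrum ℂ A, μ.re < 0

section LyapunovAux

open Filter NormedSpace

attribute [local instance] Matrix.linftyOpNormedRing Matrix.linftyOpNormedAlgebra

set_option linter.unnecessarySimpa false

variable {n : ℕ}

lemma scalar_decay {μ : ℂ} (hμ : μ.re < 0) (k : ℕ) :
    Tendsto (fun t : ℝ => Complex.exp (t * μ) * (t : ℂ) ^ k) atTop (nhds 0) := by
  have ha : (0:ℝ) < -μ.re := by linarith
  have hne : -μ.re ≠ 0 := ne_of_gt ha
  have h1 : Tendsto (fun t : ℝ => ((-μ.re) * t) ^ k * Real.exp (-((-μ.re) * t)))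
      atTop (nhds 0) :=
    (Real.tendsto_pow_mul_exp_neg_atTop_nhds_zero k).comp (tendsto_id.const_mul_atTop ha)
  have h2 : Tendsto (fun t : ℝ => t ^ k * Real.exp (t * μ.re)) atTop (nhds 0) := by
    have h3 := h1.const_mul ((-μ.re)⁻¹ ^ k)
    rw [mul_zero] at h3
    refine h3.congr fun t => ?_
    rw [mul_pow]
    have : -(-μ.re * t) = t * μ.re := by ring
    rw [this, ← mul_assoc, ← mul_assoc, ← mul_pow, inv_mul_cancel₀ hne, one_pow, one_mul]
  rw [tendsto_zero_iff_norm_tendsto_zero]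
  refine h2.congr' ?_
  filter_upwards [eventually_ge_atTop (0:ℝ)] with t ht
  rw [norm_mul, norm_pow, Complex.norm_exp,
    Complex.norm_real, Real.norm_eq_abs, abs_of_nonneg ht, mul_comm]
  congr 2
  simp [Complex.mul_re]

/-- the linear map `M ↦ M *ᵥ y` as a continuous linear map. -/
noncomputable def mulVecCLM (y : Fin n → ℂ) : Matrix (Fin n) (Fin n) ℂ →L[ℂ] (Fin n → ℂ) :=
  LinearMap.toContinuousLinearMap
    { toFun := fun M => M *ᵥ y
      map_add' := fun M M' => Matrix.add_mulVec M M' y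
      map_smul' := fun c M => Matrix.smul_mulVec c M y }

lemma exp_mulVec_eq_sum (N : Matrix (Fin n) (Fin n) ℂ) (y : Fin n → ℂ) (K : ℕ)
    (hK : N ^ K *ᵥ y = 0) (c : ℂ) :
    exp (c • N) *ᵥ y
      = ∑ k ∈ Finset.range K, ((k.factorial : ℂ)⁻¹ * c ^ k) • (N ^ k *ᵥ y) := by
  have h0 : exp (c • N) *ᵥ y = mulVecCLM y (exp (c • N)) := rfl
  rw [h0, exp_eq_tsum ℂ]
  beta_reduce
  refine (ContinuousLinearMap.map_tsum _ (expSeries_summable' (𝕂 := ℂ) (c • N))).trans ?_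
  have hterm : ∀ k : ℕ, mulVecCLM y ((k.factorial : ℂ)⁻¹ • (c • N) ^ k)
      = ((k.factorial : ℂ)⁻¹ * c ^ k) • (N ^ k *ᵥ y) := by
    intro k
    rw [_root_.map_smul, smul_pow]
    show (k.factorial : ℂ)⁻¹ • ((c ^ k • N ^ k) *ᵥ y) = _
    rw [Matrix.smul_mulVec, smul_smul]
  have hzero : ∀ k ∉ Finset.range K, mulVecCLM y ((k.factorial : ℂ)⁻¹ • (c • N) ^ k) = 0 := by
    intro k hk
    rw [hterm k]
    have hkK : K ≤ k := by simpa using hk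
    have : N ^ k *ᵥ y = 0 := by
      rw [← Nat.sub_add_cancel hkK, pow_add, ← Matrix.mulVec_mulVec, hK, Matrix.mulVec_zero]
    rw [this, smul_zero]
  refine (tsum_eq_sum hzero).trans ?_
  exact Finset.sum_congr rfl fun k _ => hterm k

lemma exp_smul_one_mat (z : ℂ) :
    exp (z • (1 : Matrix (Fin n) (Fin n) ℂ)) = Complex.exp z • 1 := by
  have h1 : z • (1 : Matrix (Fin n) (Fin n) ℂ) = algebraMap ℂ _ z :=
    (Algebra.algebraMap_eq_smul_one z).symm
  rw [h1]; refine (map_exp (algebraMap ℂ (Matrix (Fin n) (Fin n) ℂ)) (continuous_algebraMap _ _) z).symm.trans ?_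
  rw [Algebra.algebraMap_eq_smul_one, ← Complex.exp_eq_exp_ℂ]

lemma tendsto_exp_smul_mulVec {A : Matrix (Fin n) (Fin n) ℂ}
    (hA : ∀ μ ∈ spectrum ℂ A, μ.re < 0) (x : Fin n → ℂ) :
    Tendsto (fun t : ℝ => exp ((t : ℂ) • A) *ᵥ x) atTop (nhds 0) := by
  set S : Submodule ℂ (Fin n → ℂ) :=
    { carrier := {y | Tendsto (fun t : ℝ => exp ((t : ℂ) • A) *ᵥ y) atTop (nhds 0)}
      zero_mem' := by simpa [Matrix.mulVec_zero] using (tendsto_const_nhds :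
        Tendsto (fun _ : ℝ => (0 : Fin n → ℂ)) atTop (nhds 0))
      add_mem' := by
        intro a b ha hb
        have := ha.add hb
        simpa [Matrix.mulVec_add] using this
      smul_mem' := by
        intro c y hy
        have := hy.const_smul c
        simpa [Matrix.mulVec_smul] using this } with hS
  suffices h : x ∈ S from h
  have htop : (⊤ : Submodule ℂ (Fin n → ℂ)) ≤ S := by
    rw [← Module.End.iSup_maxGenEigenspace_eq_top (Matrix.toLinAlgEquiv' A)]
    refine iSup_le fun μ => fun y hy => ?_
    rcases eq_or_ne y 0 with rfl | hy0
    · exact S.zero_mem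
    · -- μ is in the spectrum of A
      have hμA : μ ∈ spectrum ℂ A := by
        rw [← AlgEquiv.spectrum_eq (Matrix.toLinAlgEquiv' (R := ℂ) (n := Fin n)) A]
        rw [← Module.End.hasEigenvalue_iff_mem_spectrum]
        rw [Module.End.mem_maxGenEigenspace] at hy
        obtain ⟨k, hk⟩ := hy
        refine Module.End.hasEigenvalue_of_hasGenEigenvalue (k := k) ?_
        rw [Module.End.hasGenEigenvalue_iff, Submodule.ne_bot_iff]
        exact ⟨y, by rw [Module.End.mem_genEigenspace_nat]; exact hk, hy0⟩
      have hμ : μ.re < 0 := hA μ hμA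
      -- y is killed by a power of N := A - μ • 1
      rw [Module.End.mem_maxGenEigenspace] at hy
      obtain ⟨K, hK⟩ := hy
      set N : Matrix (Fin n) (Fin n) ℂ := A - μ • 1 with hN
      have hNy : N ^ K *ᵥ y = 0 := by
        have h1 : Matrix.toLinAlgEquiv' A - μ • 1 = Matrix.toLinAlgEquiv' N := by
          rw [hN, map_sub, _root_.map_smul, _root_.map_one]
        have h2 : (Matrix.toLinAlgEquiv' N) ^ K = Matrix.toLinAlgEquiv' (N ^ K) :=
          (_root_.map_pow (Matrix.toLinAlgEquiv' (R := ℂ) (n := Fin n)) N K).symm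
        rw [h1, h2] at hK
        rwa [Matrix.toLinAlgEquiv'_apply] at hK
      -- rewrite the flow on y
      have key : ∀ t : ℝ, exp ((t : ℂ) • A) *ᵥ y
          = ∑ k ∈ Finset.range K,
              ((k.factorial : ℂ)⁻¹ * (Complex.exp ((t : ℂ) * μ) * (t : ℂ) ^ k)) •
                (N ^ k *ᵥ y) := by
        intro t
        have hsplit : (t : ℂ) • A = ((t : ℂ) * μ) • (1 : Matrix (Fin n) (Fin n) ℂ)
            + (t : ℂ) • N := by
          rw [hN, smul_sub, smul_smul]
          abel
        have hcomm : Commute (((t : ℂ) * μ) • (1 : Matrix (Fin n) (Fin n) ℂ)) ((t : ℂ) • N) :=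
          ((Commute.one_left _).smul_left _).smul_right _
        rw [hsplit, Matrix.exp_add_of_commute _ _ hcomm, exp_smul_one_mat,
          smul_mul_assoc, one_mul, Matrix.smul_mulVec,
          exp_mulVec_eq_sum N y K hNy (t : ℂ), Finset.smul_sum]
        refine Finset.sum_congr rfl fun k _ => ?_
        rw [smul_smul]
        ring_nf
      refine (Tendsto.congr (fun t => (key t).symm) ?_ : y ∈ S)
      have : Tendsto (fun t : ℝ => ∑ k ∈ Finset.range K,
          ((k.factorial : ℂ)⁻¹ * (Complex.exp ((t : ℂ) * μ) * (t : ℂ) ^ k)) • (N ^ k *ᵥ y))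
          atTop (nhds 0) := by
        have h0 : (0 : Fin n → ℂ) = ∑ k ∈ Finset.range K, (0 : Fin n → ℂ) := by simp
        rw [h0]
        refine tendsto_finset_sum _ fun k _ => ?_
        have hc : Tendsto (fun t : ℝ =>
            (k.factorial : ℂ)⁻¹ * (Complex.exp ((t : ℂ) * μ) * (t : ℂ) ^ k)) atTop (nhds 0) := by
          have := (scalar_decay hμ k).const_mul ((k.factorial : ℂ)⁻¹)
          simpa using this
        simpa using hc.smul_const (N ^ k *ᵥ y)
      exact this
  exact htop Submodule.mem_top

lemma hurwitz_conjTranspose {A : Matrix (Fin n) (Fin n) ℂ}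
    (hA : ∀ μ ∈ spectrum ℂ A, μ.re < 0) :
    ∀ μ ∈ spectrum ℂ Aᴴ, μ.re < 0 := by
  intro μ hμ
  rw [spectrum.mem_iff] at hμ
  have key : algebraMap ℂ (Matrix (Fin n) (Fin n) ℂ) μ - Aᴴ
      = (algebraMap ℂ (Matrix (Fin n) (Fin n) ℂ) (star μ) - A)ᴴ := by
    rw [Matrix.conjTranspose_sub, Algebra.algebraMap_eq_smul_one,
      Algebra.algebraMap_eq_smul_one, Matrix.conjTranspose_smul, star_star,
      Matrix.conjTranspose_one]
  rw [key, Matrix.isUnit_conjTranspose] at hμ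
  have : (star μ) ∈ spectrum ℂ A := spectrum.mem_iff.mpr hμ
  have := hA _ this
  simpa using this

noncomputable def dotCLM (x : Fin n → ℂ) : Matrix (Fin n) (Fin n) ℂ →L[ℝ] ℂ :=
  LinearMap.toContinuousLinearMap <| LinearMap.restrictScalars ℝ
    { toFun := fun B : Matrix (Fin n) (Fin n) ℂ => star x ⬝ᵥ (B *ᵥ x)
      map_add' := fun B C => by simp [Matrix.add_mulVec, dotProduct_add]
      map_smul' := fun c B => by simp [Matrix.smul_mulVec, dotProduct_smul]
      : Matrix (Fin n) (Fin n) ℂ →ₗ[ℂ] ℂ }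

lemma dotCLM_apply (x : Fin n → ℂ) (B : Matrix (Fin n) (Fin n) ℂ) :
    dotCLM x B = star x ⬝ᵥ (B *ᵥ x) := rfl

theorem lyapunov_aux {n : ℕ} (A Q P : Matrix (Fin n) (Fin n) ℂ)
    (hA : ∀ μ ∈ spectrum ℂ A, μ.re < 0) (hQ : Q.PosSemidef) (hP : P.IsHermitian)
    (hLyap : A * P + P * Aᴴ + Q = 0) :
    P.PosSemidef := by
  have hAH : ∀ μ ∈ spectrum ℂ Aᴴ, μ.re < 0 := hurwitz_conjTranspose hA
  have hPQ : A * P + P * Aᴴ = -Q := eq_neg_of_add_eq_zero_left hLyap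
  refine Matrix.PosSemidef.of_dotProduct_mulVec_nonneg hP fun x => ?_
  set M : ℝ → Matrix (Fin n) (Fin n) ℂ := fun t => exp ((t : ℂ) • A) with hM
  set Mh : ℝ → Matrix (Fin n) (Fin n) ℂ := fun t => exp ((t : ℂ) • Aᴴ) with hMhdef
  have hMh : ∀ t, (M t)ᴴ = Mh t := by
    intro t
    rw [hM, hMhdef, ← Matrix.exp_conjTranspose]
    congr 1
    rw [Matrix.conjTranspose_smul]
    simp [Complex.star_def, Complex.conj_ofReal]
  set u : ℝ → (Fin n → ℂ) := fun t => Mh t *ᵥ x with hu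
  -- dot product reduction
  have hdotred : ∀ t (B : Matrix (Fin n) (Fin n) ℂ),
      star x ⬝ᵥ ((M t * B * Mh t) *ᵥ x) = star (u t) ⬝ᵥ (B *ᵥ u t) := by
    intro t B
    have hst : star (u t) = star x ᵥ* M t := by
      show star (Mh t *ᵥ x) = star x ᵥ* M t
      rw [← hMh t, Matrix.star_mulVec, Matrix.conjTranspose_conjTranspose]
    rw [← Matrix.mulVec_mulVec, ← Matrix.mulVec_mulVec, Matrix.dotProduct_mulVec (star x),
      ← hst]
  -- derivative of the quadratic flow
  have hG : ∀ t, HasDerivAt (fun s => M s * P * Mh s) (-(M t * Q * Mh t)) t := by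
    intro t
    have hMd : HasDerivAt M (A * M t) t := by
      show HasDerivAt (fun s : ℝ => exp (((s : ℂ)) • A)) (A * exp ((t : ℂ) • A)) t
      have h1 : HasDerivAt (fun z : ℂ => exp (z • A)) (A * exp ((t : ℂ) • A)) ((t : ℝ) : ℂ) :=
        hasDerivAt_exp_smul_const' (𝕂 := ℂ) A (t : ℂ)
      have h2 : HasDerivAt (fun s : ℝ => (s : ℂ)) (1 : ℂ) t := by
        simpa using (hasDerivAt_id t).ofReal_comp
      have h3 := h1.scomp t h2
      rw [one_smul] at h3
      exact h3
    have hMhd : HasDerivAt Mh (Mh t * Aᴴ) t := by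
      show HasDerivAt (fun s : ℝ => exp (((s : ℂ)) • Aᴴ)) (exp ((t : ℂ) • Aᴴ) * Aᴴ) t
      have h1 : HasDerivAt (fun z : ℂ => exp (z • Aᴴ)) (exp ((t : ℂ) • Aᴴ) * Aᴴ) ((t : ℝ) : ℂ) :=
        hasDerivAt_exp_smul_const (𝕂 := ℂ) Aᴴ (t : ℂ)
      have h2 : HasDerivAt (fun s : ℝ => (s : ℂ)) (1 : ℂ) t := by
        simpa using (hasDerivAt_id t).ofReal_comp
      have h3 := h1.scomp t h2
      rw [one_smul] at h3
      exact h3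
    have h := (hMd.mul_const P).mul hMhd
    have hc1 : A * M t = M t * A := ((Commute.refl A).smul_right (t : ℂ)).exp_right |>.eq
    have hc2 : Aᴴ * Mh t = Mh t * Aᴴ := ((Commute.refl Aᴴ).smul_right (t : ℂ)).exp_right |>.eq
    have heq : A * M t * P * Mh t + M t * P * (Mh t * Aᴴ) = -(M t * Q * Mh t) := by
      rw [hc1, ← hc2]
      have : M t * A * P * Mh t + M t * P * (Aᴴ * Mh t) = M t * (A * P + P * Aᴴ) * Mh t := by
        noncomm_ring
      rw [this, hPQ]
      noncomm_ring
    rw [heq] at h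
    exact h
  -- the scalar function
  set g : ℝ → ℂ := fun t => dotCLM x (M t * P * Mh t) with hg
  have hgd : ∀ t, HasDerivAt g (dotCLM x (-(M t * Q * Mh t))) t := fun t =>
    (dotCLM x).hasFDerivAt.comp_hasDerivAt t (hG t)
  set f : ℝ → ℝ := fun t => (g t).re with hf
  have hfd : ∀ t, HasDerivAt f ((dotCLM x (-(M t * Q * Mh t))).re) t := fun t =>
    Complex.reCLM.hasFDerivAt.comp_hasDerivAt t (hgd t)
  -- sign of the derivative
  have hsign : ∀ t, (dotCLM x (-(M t * Q * Mh t))).re ≤ 0 := by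
    intro t
    rw [map_neg]
    have hQu : 0 ≤ star (u t) ⬝ᵥ (Q *ᵥ u t) := hQ.dotProduct_mulVec_nonneg (u t)
    have : dotCLM x (M t * Q * Mh t) = star (u t) ⬝ᵥ (Q *ᵥ u t) := by
      rw [dotCLM_apply]; exact hdotred t Q
    rw [Complex.neg_re, this]
    have := (Complex.le_def.mp hQu).1
    simpa using this
  -- f is antitone
  have hanti : Antitone f :=
    antitone_of_deriv_nonpos (fun t => (hfd t).differentiableAt)
      (fun t => by rw [(hfd t).deriv]; exact hsign t)
  -- f tends to 0
  have hulim : Tendsto u atTop (nhds 0) := tendsto_exp_smul_mulVec hAH x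
  have hglim : Tendsto g atTop (nhds 0) := by
    have hgeq : ∀ t, g t = star (u t) ⬝ᵥ (P *ᵥ u t) := fun t => by
      show dotCLM x (M t * P * Mh t) = _
      rw [dotCLM_apply]; exact hdotred t P
    have hstar : Tendsto (fun t => star (u t)) atTop (nhds 0) := by
      have := (continuous_star.tendsto (0 : Fin n → ℂ)).comp hulim
      simpa [Function.comp_def] using this
    have hPu : Tendsto (fun t => P *ᵥ u t) atTop (nhds 0) := by
      have hcont : Continuous (P.mulVecLin) := LinearMap.continuous_of_finiteDimensional _
      have := (hcont.tendsto (0 : Fin n → ℂ)).comp hulim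
      simpa [Function.comp_def] using this
    have : Tendsto (fun t => star (u t) ⬝ᵥ (P *ᵥ u t)) atTop (nhds 0) := by
      have h0 : (0 : ℂ) = ∑ i : Fin n, 0 := by simp
      rw [h0]
      refine tendsto_finset_sum _ fun i _ => ?_
      have h1 : Tendsto (fun t => star (u t) i) atTop (nhds 0) :=
        ((continuous_apply i).tendsto (0 : Fin n → ℂ)).comp hstar
      have h2 : Tendsto (fun t => (P *ᵥ u t) i) atTop (nhds 0) :=
        ((continuous_apply i).tendsto (0 : Fin n → ℂ)).comp hPu
      simpa using h1.mul h2
    exact (Tendsto.congr (fun t => (hgeq t).symm) this)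
  have hflim : Tendsto f atTop (nhds 0) := by
    have := (Complex.continuous_re.tendsto (0 : ℂ)).comp hglim
    simpa [Function.comp_def] using this
  -- conclude 0 ≤ f 0
  have hf0 : 0 ≤ f 0 := by
    refine le_of_tendsto hflim ?_
    filter_upwards [eventually_ge_atTop (0 : ℝ)] with t ht
    exact hanti ht
  -- g 0 is the quadratic form of P
  have hg0 : g 0 = star x ⬝ᵥ (P *ᵥ x) := by
    have hM0 : M 0 = 1 := by rw [hM]; simp [exp_zero]
    have hMh0 : Mh 0 = 1 := by rw [hMhdef]; simp [exp_zero]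
    show dotCLM x (M 0 * P * Mh 0) = _
    rw [dotCLM_apply, hM0, hMh0, one_mul, mul_one]
  -- imaginary part vanishes
  have him : (star x ⬝ᵥ (P *ᵥ x)).im = 0 := by
    have hself : star (star x ⬝ᵥ (P *ᵥ x)) = star x ⬝ᵥ (P *ᵥ x) := by
      calc star (star x ⬝ᵥ (P *ᵥ x)) = star (P *ᵥ x) ⬝ᵥ x := by
            rw [← Matrix.star_dotProduct]
        _ = (star x ᵥ* P) ⬝ᵥ x := by rw [Matrix.star_mulVec, hP.eq]
        _ = star x ⬝ᵥ (P *ᵥ x) := by rw [← Matrix.dotProduct_mulVec]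
    have : (starRingEnd ℂ) (star x ⬝ᵥ (P *ᵥ x)) = star x ⬝ᵥ (P *ᵥ x) := hself
    exact Complex.conj_eq_iff_im.mp this
  -- finish
  have hre : 0 ≤ (star x ⬝ᵥ (P *ᵥ x)).re := by
    have : f 0 = (star x ⬝ᵥ (P *ᵥ x)).re := by rw [hf]; simp only; rw [hg0]
    linarith [hf0, this.symm.le, this.le]
  rw [Complex.le_def]
  exact ⟨by simpa using hre, by simp [him]⟩

end LyapunovAux

/-- **Lyapunov stability theorem (positivity part).**
If `A` is Hurwitz, `Q` is positive semidefinite and the Hermitian matrix `P` satisfies the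
Lyapunov equation `A * P + P * Aᴴ + Q = 0`, then `P` is positive semidefinite. -/
theorem lyapunov_solution_posSemidef {n : ℕ} (A Q P : Matrix (Fin n) (Fin n) ℂ)
    (hA : A.IsHurwitz) (hQ : Q.PosSemidef) (hP : P.IsHermitian)
    (hLyap : A * P + P * Aᴴ + Q = 0) :
    P.PosSemidef :=
  lyapunov_aux A Q P hA hQ hP hLyap
end

section
/- Let A be an n×n complex Hurwitz matrix and Q an n×n complex matrix. Then the improper integral P = ∫₀^∞ exp(tA)·Q·exp(tAᴴ) dt converges, and P satisfies the Lyapunov equation A·P + P·Aᴴ + Q = 0; moreover, if Q is positive semidefinite then P is positive semidefinite. -/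
open Matrix MeasureTheory NormedSpace
open scoped ComplexOrder

attribute [local instance] Matrix.normedAddCommGroup Matrix.normedSpace

namespace LyapAux

variable {n : ℕ}

/-- Exponential decay predicate. -/
def Dec {E : Type*} [SeminormedAddCommGroup E] (f : ℝ → E) : Prop :=
  ∃ c > (0:ℝ), ∃ C ≥ (0:ℝ), ∀ t : ℝ, 0 ≤ t → ‖f t‖ ≤ C * Real.exp (-(c * t))

section Dec

variable {E F : Type*} [SeminormedAddCommGroup E] [SeminormedAddCommGroup F]

lemma Dec.of_le {f : ℝ → E} {g : ℝ → F} (hf : Dec f) {K : ℝ} (hK : 0 ≤ K)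
    (h : ∀ t : ℝ, 0 ≤ t → ‖g t‖ ≤ K * ‖f t‖) : Dec g := by
  obtain ⟨c, hc, C, hC, hb⟩ := hf
  refine ⟨c, hc, K * C, mul_nonneg hK hC, fun t ht => ?_⟩
  calc ‖g t‖ ≤ K * ‖f t‖ := h t ht
    _ ≤ K * (C * Real.exp (-(c * t))) :=
      mul_le_mul_of_nonneg_left (hb t ht) hK
    _ = K * C * Real.exp (-(c * t)) := by ring

lemma Dec.zero : Dec (fun _ : ℝ => (0 : E)) :=
  ⟨1, one_pos, 0, le_rfl, fun t _ => by simp [Real.exp_nonneg]⟩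

lemma Dec.add {f g : ℝ → E} (hf : Dec f) (hg : Dec g) : Dec (fun t => f t + g t) := by
  obtain ⟨c₁, hc₁, C₁, hC₁, h₁⟩ := hf
  obtain ⟨c₂, hc₂, C₂, hC₂, h₂⟩ := hg
  refine ⟨min c₁ c₂, lt_min hc₁ hc₂, C₁ + C₂, add_nonneg hC₁ hC₂, fun t ht => ?_⟩
  have e₁ : Real.exp (-(c₁ * t)) ≤ Real.exp (-(min c₁ c₂ * t)) := by
    apply Real.exp_le_exp.2; nlinarith [min_le_left c₁ c₂]
  have e₂ : Real.exp (-(c₂ * t)) ≤ Real.exp (-(min c₁ c₂ * t)) := by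
    apply Real.exp_le_exp.2; nlinarith [min_le_right c₁ c₂]
  calc ‖f t + g t‖ ≤ ‖f t‖ + ‖g t‖ := norm_add_le _ _
    _ ≤ C₁ * Real.exp (-(c₁ * t)) + C₂ * Real.exp (-(c₂ * t)) := add_le_add (h₁ t ht) (h₂ t ht)
    _ ≤ C₁ * Real.exp (-(min c₁ c₂ * t)) + C₂ * Real.exp (-(min c₁ c₂ * t)) := by
        apply add_le_add <;> apply mul_le_mul_of_nonneg_left (by assumption) (by assumption)
    _ = (C₁ + C₂) * Real.exp (-(min c₁ c₂ * t)) := by ring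

lemma Dec.sum {ι : Type*} (s : Finset ι) (f : ι → ℝ → E) (h : ∀ i ∈ s, Dec (f i)) :
    Dec (fun t => ∑ i ∈ s, f i t) := by
  classical
  induction s using Finset.induction_on with
  | empty => simpa using Dec.zero
  | @insert a s' hx ih =>
    simp only [Finset.sum_insert hx]
    exact (h a (Finset.mem_insert_self a s')).add
      (ih fun i hi => h i (Finset.mem_insert_of_mem hi))

lemma Dec.clm {𝕜 : Type*} [NontriviallyNormedField 𝕜] [NormedSpace 𝕜 E] [NormedSpace 𝕜 F]
    (L : E →L[𝕜] F) {f : ℝ → E} (hf : Dec f) : Dec (fun t => L (f t)) :=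
  hf.of_le (norm_nonneg L) fun t _ => L.le_opNorm (f t)

lemma Dec.tendsto_zero {f : ℝ → E} (hf : Dec f) :
    Filter.Tendsto f Filter.atTop (nhds 0) := by
  obtain ⟨c, hc, C, hC, h⟩ := hf
  have hlim : Filter.Tendsto (fun t : ℝ => C * Real.exp (-(c * t)))
      Filter.atTop (nhds 0) := by
    have h1 : Filter.Tendsto (fun t : ℝ => -(c * t)) Filter.atTop Filter.atBot := by
      have := (Filter.tendsto_id (α := ℝ)).const_mul_atTop hc
      exact Filter.tendsto_neg_atTop_atBot.comp this
    have := (Real.tendsto_exp_atBot.comp h1).const_mul C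
    simpa using this
  apply squeeze_zero_norm' _ hlim
  filter_upwards [Filter.eventually_ge_atTop (0:ℝ)] with t ht using h t ht

end Dec



variable {n : ℕ}

lemma norm_mul_le' (X Y : Matrix (Fin n) (Fin n) ℂ) :
    ‖X * Y‖ ≤ n * ‖X‖ * ‖Y‖ := by
  refine (Matrix.norm_le_iff (by positivity)).2 fun i j => ?_
  rw [Matrix.mul_apply]
  calc ‖∑ k, X i k * Y k j‖ ≤ ∑ k, ‖X i k * Y k j‖ := norm_sum_le _ _
    _ ≤ ∑ _k : Fin n, ‖X‖ * ‖Y‖ := by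
        refine Finset.sum_le_sum fun k _ => ?_
        calc ‖X i k * Y k j‖ ≤ ‖X i k‖ * ‖Y k j‖ := norm_mul_le _ _
          _ ≤ ‖X‖ * ‖Y‖ := by
              exact mul_le_mul (Matrix.norm_entry_le_entrywise_sup_norm X)
                (Matrix.norm_entry_le_entrywise_sup_norm Y) (norm_nonneg _) (norm_nonneg _)
    _ = n * ‖X‖ * ‖Y‖ := by
        simp [Finset.sum_const, Finset.card_univ, mul_assoc]

lemma norm_one_le : ‖(1 : Matrix (Fin n) (Fin n) ℂ)‖ ≤ 1 := by
  refine (Matrix.norm_le_iff zero_le_one).2 fun i j => ?_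
  rw [Matrix.one_apply]
  split <;> simp

lemma norm_pow_le (X : Matrix (Fin n) (Fin n) ℂ) (k : ℕ) :
    ‖X ^ k‖ ≤ (n * ‖X‖ + 1) ^ k := by
  induction k with
  | zero => simpa using norm_one_le
  | succ k ih =>
    have h1 : ‖X ^ (k+1)‖ ≤ n * ‖X ^ k‖ * ‖X‖ := by
      rw [pow_succ]; exact norm_mul_le' _ _
    have hnX : (0:ℝ) ≤ n * ‖X‖ := by positivity
    calc ‖X ^ (k+1)‖ ≤ n * ‖X ^ k‖ * ‖X‖ := h1
      _ = (n * ‖X‖) * ‖X ^ k‖ := by ring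
      _ ≤ (n * ‖X‖ + 1) * (n * ‖X‖ + 1) ^ k := by
          apply mul_le_mul (by linarith) ih (norm_nonneg _) (by linarith)
      _ = (n * ‖X‖ + 1) ^ (k+1) := by rw [pow_succ]; ring

lemma expSummable (X : Matrix (Fin n) (Fin n) ℂ) :
    Summable (fun k : ℕ => ((Nat.factorial k : ℂ))⁻¹ • X ^ k) := by
  refine Summable.of_norm_bounded (g := fun k => (n * ‖X‖ + 1) ^ k / (Nat.factorial k))
    (Real.summable_pow_div_factorial _) fun k => ?_
  rw [norm_smul, norm_inv, Complex.norm_natCast]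
  calc ((Nat.factorial k : ℝ))⁻¹ * ‖X ^ k‖
      ≤ ((Nat.factorial k : ℝ))⁻¹ * (n * ‖X‖ + 1) ^ k :=
        mul_le_mul_of_nonneg_left (norm_pow_le X k) (by positivity)
    _ = (n * ‖X‖ + 1) ^ k / (Nat.factorial k) := by rw [div_eq_inv_mul]

lemma exp_mulVec_tsum (X : Matrix (Fin n) (Fin n) ℂ) (v : Fin n → ℂ) :
    exp X *ᵥ v = ∑' k : ℕ, ((Nat.factorial k : ℂ))⁻¹ • (X ^ k *ᵥ v) := by
  let L0 : Matrix (Fin n) (Fin n) ℂ →ₗ[ℂ] (Fin n → ℂ) :=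
    { toFun := fun M => M *ᵥ v
      map_add' := fun a b => Matrix.add_mulVec a b v
      map_smul' := fun c M => Matrix.smul_mulVec c M v }
  let L : Matrix (Fin n) (Fin n) ℂ →L[ℂ] (Fin n → ℂ) := LinearMap.toContinuousLinearMap L0
  have hL : ∀ M, L M = M *ᵥ v := fun _ => rfl
  calc exp X *ᵥ v = L (exp X) := (hL _).symm
    _ = L (∑' k : ℕ, ((Nat.factorial k : ℂ))⁻¹ • X ^ k) := by rw [exp_eq_tsum ℂ]
    _ = ∑' k : ℕ, L (((Nat.factorial k : ℂ))⁻¹ • X ^ k) := L.map_tsum (expSummable X)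
    _ = ∑' k : ℕ, ((Nat.factorial k : ℂ))⁻¹ • (X ^ k *ᵥ v) := by
        refine tsum_congr fun k => ?_
        rw [ContinuousLinearMap.map_smul, hL]

lemma exp_smul_one (c : ℂ) :
    exp (c • (1 : Matrix (Fin n) (Fin n) ℂ)) = Complex.exp c • 1 := by
  have h1 : c • (1 : Matrix (Fin n) (Fin n) ℂ) = Matrix.diagonal (fun _ => c) := by
    ext i j
    by_cases h : i = j <;> simp [Matrix.one_apply, Matrix.diagonal_apply, h]
  have h3 : (Complex.exp c) • (1 : Matrix (Fin n) (Fin n) ℂ)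
      = Matrix.diagonal (fun _ => Complex.exp c) := by
    ext i j
    by_cases h : i = j <;> simp [Matrix.one_apply, Matrix.diagonal_apply, h]
  have h2 : exp (fun _ : Fin n => c) = fun _ : Fin n => Complex.exp c := by
    funext i; rw [Pi.coe_exp, Complex.exp_eq_exp_ℂ]
  rw [h1, Matrix.exp_diagonal, h2, h3]


end LyapAux

namespace LyapAux

lemma decay_single {n : ℕ} (M : Matrix (Fin n) (Fin n) ℂ) (μ : ℂ) (hμ : μ.re < 0)
    (v : Fin n → ℂ) (k : ℕ) (hv : ((M - μ • 1) ^ k) *ᵥ v = 0) :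
    Dec (fun t : ℝ => exp (t • M) *ᵥ v) := by
  set N := M - μ • (1 : Matrix (Fin n) (Fin n) ℂ) with hN
  set a : ℝ := -μ.re / 2 with ha
  have ha0 : (0:ℝ) < a := by simp only [ha]; linarith
  refine ⟨a, ha0, ∑ j ∈ Finset.range k, a⁻¹ ^ j * ‖N ^ j *ᵥ v‖,
    Finset.sum_nonneg fun j _ => by positivity, fun t ht => ?_⟩
  -- splitting of the exponent
  have hsplit : t • M = (↑t * μ) • (1 : Matrix (Fin n) (Fin n) ℂ) + t • N := by
    have hM : M = μ • (1 : Matrix (Fin n) (Fin n) ℂ) + N := by rw [hN]; abel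
    rw [hM, smul_add]
    congr 1
    rw [← smul_assoc]
    norm_num [Complex.real_smul]
  have hcomm : Commute ((↑t * μ) • (1 : Matrix (Fin n) (Fin n) ℂ)) (t • N) :=
    (Commute.one_left (t • N)).smul_left _
  have hexp : exp (t • M) = Complex.exp (↑t * μ) • exp (t • N) := by
    rw [hsplit, Matrix.exp_add_of_commute _ _ hcomm, exp_smul_one, smul_mul_assoc, one_mul]
  -- the nilpotent part applied to v is a finite sum
  have hNj : ∀ j, k ≤ j → N ^ j *ᵥ v = 0 := by
    intro j hj
    rw [← Nat.sub_add_cancel hj, pow_add, ← Matrix.mulVec_mulVec, hv, Matrix.mulVec_zero]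
  have hser : exp (t • N) *ᵥ v
      = ∑ j ∈ Finset.range k, ((Nat.factorial j : ℂ))⁻¹ • (t ^ j • (N ^ j *ᵥ v)) := by
    rw [exp_mulVec_tsum]
    have hterm : ∀ j : ℕ, ((Nat.factorial j : ℂ))⁻¹ • ((t • N) ^ j *ᵥ v)
        = ((Nat.factorial j : ℂ))⁻¹ • (t ^ j • (N ^ j *ᵥ v)) := by
      intro j
      rw [smul_pow, Matrix.smul_mulVec]
    rw [tsum_congr hterm]
    refine tsum_eq_sum ?_
    intro j hj
    rw [hNj j (by simpa using hj)]
    simp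
  -- norm estimate
  show ‖exp (t • M) *ᵥ v‖ ≤ _
  rw [hexp, Matrix.smul_mulVec, norm_smul, hser]
  have habs : ‖Complex.exp (↑t * μ)‖ = Real.exp (t * μ.re) := by
    rw [Complex.norm_exp]
    congr 1
    simp
  rw [habs]
  have hterm_le : ∀ j ∈ Finset.range k,
      ‖((Nat.factorial j : ℂ))⁻¹ • (t ^ j • (N ^ j *ᵥ v))‖
        ≤ a⁻¹ ^ j * ‖N ^ j *ᵥ v‖ * Real.exp (a * t) := by
    intro j _
    rw [norm_smul, norm_smul, norm_inv, Complex.norm_natCast, Real.norm_eq_abs,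
      abs_of_nonneg (pow_nonneg ht j)]
    have h1 := Real.pow_div_factorial_le_exp (a*t) (mul_nonneg ha0.le ht) j
    rw [mul_pow] at h1
    -- h1 : a^j * t^j / j! ≤ exp (a*t)
    have h2 : (Nat.factorial j : ℝ)⁻¹ * t ^ j ≤ a⁻¹ ^ j * Real.exp (a * t) := by
      have ha' : (0:ℝ) < a ^ j := pow_pos ha0 j
      have hfj : (0:ℝ) < (Nat.factorial j : ℝ) := by exact_mod_cast Nat.factorial_pos j
      rw [inv_pow]
      calc (Nat.factorial j : ℝ)⁻¹ * t ^ j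
          = (a ^ j)⁻¹ * (a ^ j * t ^ j / (Nat.factorial j)) := by
            field_simp
        _ ≤ (a ^ j)⁻¹ * Real.exp (a * t) :=
            mul_le_mul_of_nonneg_left h1 (by positivity)
    calc (Nat.factorial j : ℝ)⁻¹ * (t ^ j * ‖N ^ j *ᵥ v‖)
        = ((Nat.factorial j : ℝ)⁻¹ * t ^ j) * ‖N ^ j *ᵥ v‖ := by ring
      _ ≤ (a⁻¹ ^ j * Real.exp (a * t)) * ‖N ^ j *ᵥ v‖ :=
          mul_le_mul_of_nonneg_right h2 (norm_nonneg _)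
      _ = a⁻¹ ^ j * ‖N ^ j *ᵥ v‖ * Real.exp (a * t) := by ring
  calc Real.exp (t * μ.re) * ‖∑ j ∈ Finset.range k,
        ((Nat.factorial j : ℂ))⁻¹ • (t ^ j • (N ^ j *ᵥ v))‖
      ≤ Real.exp (t * μ.re) * ∑ j ∈ Finset.range k,
          (a⁻¹ ^ j * ‖N ^ j *ᵥ v‖ * Real.exp (a * t)) := by
        apply mul_le_mul_of_nonneg_left _ (Real.exp_nonneg _)
        exact (norm_sum_le _ _).trans (Finset.sum_le_sum hterm_le)
    _ = (∑ j ∈ Finset.range k, a⁻¹ ^ j * ‖N ^ j *ᵥ v‖)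
          * (Real.exp (t * μ.re) * Real.exp (a * t)) := by
        rw [← Finset.sum_mul]; ring
    _ = (∑ j ∈ Finset.range k, a⁻¹ ^ j * ‖N ^ j *ᵥ v‖) * Real.exp (-(a * t)) := by
        rw [← Real.exp_add]
        congr 2
        simp only [ha]
        ring


lemma decay_mulVec {n : ℕ} (A : Matrix (Fin n) (Fin n) ℂ) (hA : ∀ μ ∈ spectrum ℂ A, μ.re < 0)
    (v : Fin n → ℂ) : Dec (fun t : ℝ => exp (t • A) *ᵥ v) := by
  classical
  set T : Module.End ℂ (Fin n → ℂ) := Matrix.toLinAlgEquiv' A with hT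
  have htop : (⨆ μ : ℂ, T.maxGenEigenspace μ) = ⊤ :=
    Module.End.iSup_maxGenEigenspace_eq_top T
  have hv : v ∈ (⨆ μ : ℂ, T.maxGenEigenspace μ) := htop ▸ Submodule.mem_top
  obtain ⟨d, hd, hsum⟩ := (Submodule.mem_iSup_iff_exists_finsupp _ _).mp hv
  have hrepr : ∀ t : ℝ, exp (t • A) *ᵥ v
      = ∑ μ ∈ d.support, exp (t • A) *ᵥ d μ := by
    intro t
    have : v = ∑ μ ∈ d.support, d μ := by
      rw [← hsum]; rfl
    rw [this]
    have h4 := map_sum ((exp (t • A)).mulVecLin) (fun μ => d μ) d.support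
    simp only [Matrix.mulVecLin_apply] at h4
    exact h4
  have : Dec (fun t : ℝ => ∑ μ ∈ d.support, exp (t • A) *ᵥ d μ) := by
    refine Dec.sum _ _ fun μ hμsup => ?_
    -- d μ is a generalized eigenvector
    obtain ⟨k, hk⟩ := (Module.End.mem_maxGenEigenspace T μ (d μ)).mp (hd μ)
    have hne : d μ ≠ 0 := Finsupp.mem_support_iff.mp hμsup
    -- μ is an eigenvalue
    have hkpos : k ≠ 0 := by
      rintro rfl
      simp only [pow_zero, Module.End.one_apply] at hk
      exact hne hk
    have hgen : T.HasGenEigenvalue μ k := by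
      rw [Module.End.HasGenEigenvalue]
      refine Submodule.ne_bot_iff _ |>.mpr ⟨d μ, ?_, hne⟩
      rw [Module.End.mem_genEigenspace_nat]
      exact hk
    have hspec : μ ∈ spectrum ℂ A := by
      have h1 : T.HasEigenvalue μ := Module.End.hasEigenvalue_of_hasGenEigenvalue hgen
      have h2 : μ ∈ spectrum ℂ T := Module.End.hasEigenvalue_iff_mem_spectrum.mp h1
      rwa [hT, AlgEquiv.spectrum_eq Matrix.toLinAlgEquiv' A] at h2
    -- translate the kernel condition to matrices
    have hker : ((A - μ • 1) ^ k) *ᵥ d μ = 0 := by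
      have h3 : (T - μ • 1) ^ k = Matrix.toLinAlgEquiv' ((A - μ • 1) ^ k) := by
        have hsm : Matrix.toLinAlgEquiv' (μ • (1 : Matrix (Fin n) (Fin n) ℂ))
            = μ • (1 : Module.End ℂ (Fin n → ℂ)) := by
          rw [← Algebra.algebraMap_eq_smul_one, ← Algebra.algebraMap_eq_smul_one]
          exact AlgEquiv.commutes _ μ
        rw [map_pow, map_sub, hsm, hT]
      rw [h3] at hk
      rwa [Matrix.toLinAlgEquiv'_apply] at hk
    exact decay_single A μ (hA μ hspec) (d μ) k hker
  obtain ⟨c, hc, C, hC, hb⟩ := this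
  refine ⟨c, hc, C, hC, fun t ht => ?_⟩
  show ‖exp (t • A) *ᵥ v‖ ≤ _
  rw [hrepr t]
  simpa using hb t ht


/-- Column-insertion continuous linear map. -/
noncomputable def colCLM {n : ℕ} (j : Fin n) :
    (Fin n → ℂ) →L[ℂ] Matrix (Fin n) (Fin n) ℂ :=
  LinearMap.toContinuousLinearMap
  { toFun := fun v => Matrix.of fun i j' => if j' = j then v i else 0
    map_add' := by
      intro a b
      ext i j'
      by_cases h : j' = j <;> simp [h]
    map_smul' := by
      intro c a
      ext i j'
      by_cases h : j' = j <;> simp [h] }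

lemma colCLM_apply {n : ℕ} (j : Fin n) (v : Fin n → ℂ) (i : Fin n) (j' : Fin n) :
    colCLM j v i j' = if j' = j then v i else 0 := rfl

lemma matrix_eq_sum_cols {n : ℕ} (M : Matrix (Fin n) (Fin n) ℂ) :
    M = ∑ j : Fin n, colCLM j (M *ᵥ Pi.single j 1) := by
  ext i j'
  have h1 : (∑ j : Fin n, colCLM j (M *ᵥ Pi.single j 1)) i j'
      = ∑ j : Fin n, colCLM j (M *ᵥ Pi.single j 1) i j' := by
    rw [Matrix.sum_apply]
  rw [h1]
  simp only [colCLM_apply]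
  rw [Finset.sum_ite_eq Finset.univ j' (fun j => (M *ᵥ Pi.single j 1) i)]
  simp [Matrix.mulVec_single]

lemma decay_exp {n : ℕ} (A : Matrix (Fin n) (Fin n) ℂ) (hA : ∀ μ ∈ spectrum ℂ A, μ.re < 0) :
    Dec (fun t : ℝ => exp (t • A)) := by
  have hcols : ∀ t : ℝ, exp (t • A)
      = ∑ j : Fin n, colCLM j (exp (t • A) *ᵥ Pi.single j 1) :=
    fun t => matrix_eq_sum_cols _
  have : Dec (fun t : ℝ => ∑ j : Fin n, colCLM j (exp (t • A) *ᵥ Pi.single j 1)) :=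
    Dec.sum _ _ fun j _ => (decay_mulVec A hA (Pi.single j 1)).clm (colCLM j)
  obtain ⟨c, hc, C, hC, hb⟩ := this
  refine ⟨c, hc, C, hC, fun t ht => ?_⟩
  show ‖exp (t • A)‖ ≤ _
  rw [hcols t]
  simpa using hb t ht


lemma exp_smul_conjTranspose {n : ℕ} (A : Matrix (Fin n) (Fin n) ℂ) (t : ℝ) :
    exp (t • Aᴴ) = (exp (t • A))ᴴ := by
  have h1 : t • Aᴴ = (t • A)ᴴ := by
    rw [Matrix.conjTranspose_smul, star_trivial]
  rw [h1, Matrix.exp_conjTranspose]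

lemma decay_expH {n : ℕ} (A : Matrix (Fin n) (Fin n) ℂ) (hA : ∀ μ ∈ spectrum ℂ A, μ.re < 0) :
    Dec (fun t : ℝ => exp (t • Aᴴ)) := by
  refine (decay_exp A hA).of_le zero_le_one fun t ht => ?_
  rw [exp_smul_conjTranspose, Matrix.norm_conjTranspose, one_mul]

lemma decay_F {n : ℕ} (A Q : Matrix (Fin n) (Fin n) ℂ) (hA : ∀ μ ∈ spectrum ℂ A, μ.re < 0) :
    Dec (fun t : ℝ => exp (t • A) * Q * exp (t • Aᴴ)) := by
  obtain ⟨c₁, hc₁, C₁, hC₁, h₁⟩ := decay_exp A hA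
  obtain ⟨c₂, hc₂, C₂, hC₂, h₂⟩ := decay_expH A hA
  refine ⟨c₁ + c₂, by positivity, n * n * ‖Q‖ * C₁ * C₂, by positivity, fun t ht => ?_⟩
  have hb1 := h₁ t ht
  have hb2 := h₂ t ht
  simp only at hb1 hb2
  calc ‖exp (t • A) * Q * exp (t • Aᴴ)‖
      ≤ n * ‖exp (t • A) * Q‖ * ‖exp (t • Aᴴ)‖ := norm_mul_le' _ _
    _ ≤ n * (n * ‖exp (t • A)‖ * ‖Q‖) * ‖exp (t • Aᴴ)‖ := by
        have := norm_mul_le' (exp (t • A)) Q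
        have h0 : (0:ℝ) ≤ (n:ℝ) := by positivity
        have := mul_le_mul_of_nonneg_left this h0
        exact mul_le_mul_of_nonneg_right this (norm_nonneg _)
    _ ≤ n * (n * (C₁ * Real.exp (-(c₁ * t))) * ‖Q‖) * (C₂ * Real.exp (-(c₂ * t))) := by
        have h0 : (0:ℝ) ≤ (n:ℝ) := by positivity
        apply mul_le_mul
        · apply mul_le_mul_of_nonneg_left _ h0
          apply mul_le_mul_of_nonneg_right _ (norm_nonneg Q)
          exact mul_le_mul_of_nonneg_left hb1 h0
        · exact hb2
        · exact norm_nonneg _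
        · positivity
    _ = n * n * ‖Q‖ * C₁ * C₂ * (Real.exp (-(c₁ * t)) * Real.exp (-(c₂ * t))) := by ring
    _ = n * n * ‖Q‖ * C₁ * C₂ * Real.exp (-((c₁ + c₂) * t)) := by
        rw [← Real.exp_add]; ring_nf


section Deriv
set_option maxHeartbeats 1000000

variable {n : ℕ}

local notation "Mat" => Matrix (Fin n) (Fin n) ℂ
local notation "𝒜" => (EuclideanSpace ℂ (Fin n) →L[ℂ] EuclideanSpace ℂ (Fin n))

noncomputable def φe : Mat ≃⋆ₐ[ℂ] 𝒜 := Matrix.toEuclideanCLM (𝕜 := ℂ) (n := Fin n)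

noncomputable def φlin : Mat →ₗ[ℂ] 𝒜 :=
  { toFun := φe
    map_add' := fun x y => map_add φe x y
    map_smul' := fun c x => _root_.map_smul φe c x }

noncomputable def ψlin : 𝒜 →ₗ[ℂ] Mat :=
  { toFun := φe.symm
    map_add' := fun x y => map_add φe.symm x y
    map_smul' := fun c x => _root_.map_smul φe.symm c x }

lemma phi_cont : Continuous (φe (n := n)) := by
  have h := (φlin (n := n)).continuous_of_finiteDimensional
  exact h

lemma phi_exp (M : Mat) : φe (exp M) = exp (φe M) := by
  letI : SeminormedRing Mat := Matrix.linftyOpSemiNormedRing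
  letI : NormedRing Mat := Matrix.linftyOpNormedRing
  letI : NormedAlgebra ℂ Mat := Matrix.linftyOpNormedAlgebra
  letI : NormedAlgebra ℚ Mat := Matrix.linftyOpNormedAlgebra
  haveI : @CompleteSpace Mat (@PseudoMetricSpace.toUniformSpace Mat
      (@SeminormedRing.toPseudoMetricSpace Mat (@NormedRing.toSeminormedRing Mat ‹NormedRing Mat›))) := by
    letI : NormedAddCommGroup Mat := Matrix.linftyOpNormedAddCommGroup
    letI : NormedSpace ℂ Mat := Matrix.linftyOpNormedSpace
    exact FiniteDimensional.complete ℂ Mat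
  exact map_exp φe phi_cont M

lemma phi_real_smul (t : ℝ) (M : Mat) : φe (t • M) = t • φe M := by
  have h1 : t • M = ((t : ℂ)) • M := by
    rw [← algebraMap_smul ℂ t M, Complex.coe_algebraMap]
  have h2 : t • (φe M) = ((t : ℂ)) • φe M := by
    rw [← algebraMap_smul ℂ t (φe M), Complex.coe_algebraMap]
  rw [h1, h2, _root_.map_smul]

noncomputable def ψL : 𝒜 →L[ℝ] Mat :=
  LinearMap.toContinuousLinearMap ((ψlin (n := n)).restrictScalars ℝ)

lemma ψL_apply (x : 𝒜) : ψL x = φe.symm x := by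
  rfl

lemma hasDerivAt_matrix_exp_aux (M : Mat) (t : ℝ) :
    HasDerivAt (fun s : ℝ => exp (s • φe M)) (φe M * exp (t • φe M)) t := by
  have h := hasDerivAt_exp_smul_const' (𝔸 := 𝒜) (φe M) t
  exact h

lemma exp_phi (M : Mat) (s : ℝ) : exp (s • φe M) = φe (exp (s • M)) := by
  rw [← phi_real_smul, phi_exp]

lemma hasDerivAt_matrix_exp (M : Mat) (t : ℝ) :
    HasDerivAt (fun s : ℝ => exp (s • M)) (M * exp (t • M)) t := by
  have h := hasDerivAt_matrix_exp_aux M t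
  have h2 := (ψL.hasFDerivAt (x := exp (t • φe M))).comp_hasDerivAt t h
  have h3 : (fun s : ℝ => ψL (exp (s • φe M))) = fun s : ℝ => exp (s • M) := by
    funext s
    rw [exp_phi, ψL_apply, StarAlgEquiv.symm_apply_apply]
  have h4 : ψL (φe M * exp (t • φe M)) = M * exp (t • M) := by
    rw [exp_phi, ψL_apply, ← _root_.map_mul, StarAlgEquiv.symm_apply_apply]
  have h2' : HasDerivAt (fun s : ℝ => ψL (exp (s • φe M)))
      (ψL (φe M * exp (t • φe M))) t := h2
  rw [h3, h4] at h2'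
  exact h2'

lemma hasDerivAt_F (A Q : Mat) (t : ℝ) :
    HasDerivAt (fun s : ℝ => exp (s • A) * Q * exp (s • Aᴴ))
      (A * (exp (t • A) * Q * exp (t • Aᴴ))
        + (exp (t • A) * Q * exp (t • Aᴴ)) * Aᴴ) t := by
  have hc : HasDerivAt (fun s : ℝ => exp (s • φe A) * φe Q)
      (φe A * exp (t • φe A) * φe Q) t :=
    (hasDerivAt_matrix_exp_aux A t).mul_const (φe Q)
  have hd : HasDerivAt (fun s : ℝ => exp (s • φe Aᴴ))
      (exp (t • φe Aᴴ) * φe Aᴴ) t := by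
    have h := hasDerivAt_exp_smul_const (𝔸 := 𝒜) (φe Aᴴ) t
    exact h
  have hcd := hc.mul hd
  have h2 := (ψL.hasFDerivAt).comp_hasDerivAt t hcd
  have key : ∀ s : ℝ, ψL (exp (s • φe A) * φe Q * exp (s • φe Aᴴ))
      = exp (s • A) * Q * exp (s • Aᴴ) := by
    intro s
    rw [exp_phi, exp_phi, ψL_apply, ← _root_.map_mul, ← _root_.map_mul, StarAlgEquiv.symm_apply_apply]
  have h3 : (fun s : ℝ => ψL ((fun y : ℝ => exp (y • φe A) * φe Q) s
      * (fun y : ℝ => exp (y • φe Aᴴ)) s))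
      = fun s : ℝ => exp (s • A) * Q * exp (s • Aᴴ) := by
    funext s
    exact key s
  have h4 : ψL (φe A * exp (t • φe A) * φe Q * exp (t • φe Aᴴ)
      + exp (t • φe A) * φe Q * (exp (t • φe Aᴴ) * φe Aᴴ))
      = A * (exp (t • A) * Q * exp (t • Aᴴ))
        + (exp (t • A) * Q * exp (t • Aᴴ)) * Aᴴ := by
    rw [map_add]
    congr 1
    · rw [exp_phi, exp_phi, ψL_apply, ← _root_.map_mul, ← _root_.map_mul, ← _root_.map_mul,
        StarAlgEquiv.symm_apply_apply]
      simp [mul_assoc]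
    · rw [exp_phi, exp_phi, ψL_apply, ← _root_.map_mul, ← _root_.map_mul, ← _root_.map_mul,
        StarAlgEquiv.symm_apply_apply]
      simp [mul_assoc]
  have h2' : HasDerivAt (fun s : ℝ => ψL ((fun y : ℝ => exp (y • φe A) * φe Q) s
      * (fun y : ℝ => exp (y • φe Aᴴ)) s))
      (ψL (φe A * exp (t • φe A) * φe Q * exp (t • φe Aᴴ)
        + exp (t • φe A) * φe Q * (exp (t • φe Aᴴ) * φe Aᴴ))) t := h2
  rw [h3, h4] at h2'
  exact h2'

lemma continuous_exp_smul (M : Mat) : Continuous (fun t : ℝ => exp (t • M)) :=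
  continuous_iff_continuousAt.mpr fun t => (hasDerivAt_matrix_exp M t).continuousAt

end Deriv


lemma dec_integrableOn {E : Type*} [NormedAddCommGroup E] {f : ℝ → E}
    (hc : Continuous f) (hd : Dec f) : IntegrableOn f (Set.Ioi 0) volume := by
  obtain ⟨c, hcpos, C, hC, hb⟩ := hd
  refine Integrable.mono' (g := fun t => C * Real.exp (-c * t))
    ((exp_neg_integrableOn_Ioi 0 hcpos).const_mul C) hc.aestronglyMeasurable.restrict ?_
  refine (ae_restrict_iff' measurableSet_Ioi).2 ?_
  filter_upwards with t ht
  simpa [neg_mul] using hb t (le_of_lt ht)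

end LyapAux

open LyapAux in
theorem lyapunov_integral_solution' {n : ℕ} (A Q : Matrix (Fin n) (Fin n) ℂ)
    (hA : ∀ μ ∈ spectrum ℂ A, μ.re < 0) :
    @IntegrableOn ℝ (Matrix (Fin n) (Fin n) ℂ) _ _ SeminormedAddGroup.toContinuousENorm (fun t : ℝ => exp (t • A) * Q * exp (t • Aᴴ)) (Set.Ioi 0) volume ∧
    A * (∫ t in Set.Ioi (0 : ℝ), exp (t • A) * Q * exp (t • Aᴴ)) +
      (∫ t in Set.Ioi (0 : ℝ), exp (t • A) * Q * exp (t • Aᴴ)) * Aᴴ + Q = 0 ∧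
    (Q.PosSemidef →
      (∫ t in Set.Ioi (0 : ℝ), exp (t • A) * Q * exp (t • Aᴴ)).PosSemidef) := by
  have hcont : Continuous (fun t : ℝ => exp (t • A) * Q * exp (t • Aᴴ)) :=
    ((continuous_exp_smul A).matrix_mul continuous_const).matrix_mul (continuous_exp_smul Aᴴ)
  have hint : @IntegrableOn ℝ (Matrix (Fin n) (Fin n) ℂ) _ _ SeminormedAddGroup.toContinuousENorm (fun t : ℝ => exp (t • A) * Q * exp (t • Aᴴ))
      (Set.Ioi 0) volume := dec_integrableOn hcont (decay_F A Q hA)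
  refine ⟨hint, ?_, ?_⟩
  · -- the Lyapunov equation
    set L' : Matrix (Fin n) (Fin n) ℂ →L[ℂ] Matrix (Fin n) (Fin n) ℂ :=
      LinearMap.toContinuousLinearMap (LinearMap.mulLeft ℂ A + LinearMap.mulRight ℂ Aᴴ) with hL'def
    have hL' : ∀ X, L' X = A * X + X * Aᴴ := fun X => rfl
    have hderiv : ∀ x ∈ Set.Ioi (0:ℝ),
        HasDerivAt (fun t : ℝ => exp (t • A) * Q * exp (t • Aᴴ))
          (L' (exp (x • A) * Q * exp (x • Aᴴ))) x := fun x _ => by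
      rw [hL']; exact hasDerivAt_F A Q x
    have f'int : @IntegrableOn ℝ (Matrix (Fin n) (Fin n) ℂ) _ _ SeminormedAddGroup.toContinuousENorm
        (fun x : ℝ => L' (exp (x • A) * Q * exp (x • Aᴴ))) (Set.Ioi 0) volume :=
      L'.integrable_comp hint
    have htend : Filter.Tendsto (fun t : ℝ => exp (t • A) * Q * exp (t • Aᴴ))
        Filter.atTop (nhds 0) := (decay_F A Q hA).tendsto_zero
    have key := integral_Ioi_of_hasDerivAt_of_tendsto
      hcont.continuousWithinAt hderiv f'int htend
    have hF0 : exp ((0:ℝ) • A) * Q * exp ((0:ℝ) • Aᴴ) = Q := by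
      simp [zero_smul, exp_zero]
    rw [hF0, zero_sub] at key
    erw [L'.integral_comp_comm hint] at key; replace key := (hL' _).symm.trans key
    rw [key]
    simp
  · -- positive semidefiniteness
    intro hQ
    refine .of_dotProduct_mulVec_nonneg ?_ ?_
    · -- Hermitian
      set Lstar : Matrix (Fin n) (Fin n) ℂ →L[ℝ] Matrix (Fin n) (Fin n) ℂ :=
        LinearMap.toContinuousLinearMap
          { toFun := fun X : Matrix (Fin n) (Fin n) ℂ => Xᴴ
            map_add' := fun X Y => Matrix.conjTranspose_add X Y
            map_smul' := fun (r : ℝ) X => by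
              show (r • X)ᴴ = r • Xᴴ
              rw [Matrix.conjTranspose_smul, star_trivial] } with hLstardef
      have hLstar : ∀ X, Lstar X = Xᴴ := fun X => rfl
      have hFherm : ∀ t : ℝ, (exp (t • A) * Q * exp (t • Aᴴ))ᴴ
          = exp (t • A) * Q * exp (t • Aᴴ) := by
        intro t
        rw [Matrix.conjTranspose_mul, Matrix.conjTranspose_mul, hQ.1,
          exp_smul_conjTranspose A t, Matrix.conjTranspose_conjTranspose]
        rw [← exp_smul_conjTranspose A t]
        rw [mul_assoc]
      show (∫ t in Set.Ioi (0:ℝ), exp (t • A) * Q * exp (t • Aᴴ))ᴴ = _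
      rw [← hLstar]; erw [← Lstar.integral_comp_comm hint]
      congr 1
      funext t
      exact (hLstar _).trans (hFherm t)
    · -- nonnegativity
      intro x
      set Lx : Matrix (Fin n) (Fin n) ℂ →L[ℂ] ℂ :=
        LinearMap.toContinuousLinearMap
          { toFun := fun M : Matrix (Fin n) (Fin n) ℂ => star x ⬝ᵥ (M *ᵥ x)
            map_add' := fun M N => by
              show star x ⬝ᵥ ((M + N) *ᵥ x) = star x ⬝ᵥ (M *ᵥ x) + star x ⬝ᵥ (N *ᵥ x)
              rw [Matrix.add_mulVec, dotProduct_add]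
            map_smul' := fun c M => by
              show star x ⬝ᵥ ((c • M) *ᵥ x) = c • (star x ⬝ᵥ (M *ᵥ x))
              rw [Matrix.smul_mulVec, dotProduct_smul] } with hLxdef
      have hLx : ∀ M, Lx M = star x ⬝ᵥ (M *ᵥ x) := fun _ => rfl
      have hnn : ∀ t : ℝ, 0 ≤ Lx (exp (t • A) * Q * exp (t • Aᴴ)) := by
        intro t
        rw [hLx]
        have h1 : (exp (t • A) * Q * exp (t • Aᴴ)) *ᵥ x
            = exp (t • A) *ᵥ (Q *ᵥ (exp (t • Aᴴ) *ᵥ x)) := by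
          rw [← Matrix.mulVec_mulVec, ← Matrix.mulVec_mulVec]
        rw [h1]
        have h2 : star x ⬝ᵥ (exp (t • A) *ᵥ (Q *ᵥ (exp (t • Aᴴ) *ᵥ x)))
            = star (exp (t • Aᴴ) *ᵥ x) ⬝ᵥ (Q *ᵥ (exp (t • Aᴴ) *ᵥ x)) := by
          rw [Matrix.dotProduct_mulVec, exp_smul_conjTranspose A t, Matrix.star_mulVec,
            Matrix.conjTranspose_conjTranspose]
        rw [h2]
        exact hQ.dotProduct_mulVec_nonneg _
      have hg : Integrable (fun t : ℝ => Lx (exp (t • A) * Q * exp (t • Aᴴ)))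
          (volume.restrict (Set.Ioi 0)) := Lx.integrable_comp hint
      have hrw : star x ⬝ᵥ ((∫ t in Set.Ioi (0:ℝ), exp (t • A) * Q * exp (t • Aᴴ)) *ᵥ x)
          = ∫ t in Set.Ioi (0:ℝ), Lx (exp (t • A) * Q * exp (t • Aᴴ)) := by
        rw [← hLx]
        exact (Lx.integral_comp_comm hint).symm
      rw [hrw]
      refine Complex.nonneg_iff.mpr ⟨?_, ?_⟩
      · rw [← RCLike.re_to_complex, ← integral_re hg]
        refine setIntegral_nonneg measurableSet_Ioi fun t _ => ?_
        have := (Complex.nonneg_iff.mp (hnn t)).1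
        simpa using this
      · rw [← RCLike.im_to_complex, ← integral_im hg]
        have hzero : ∀ t : ℝ, (Lx (exp (t • A) * Q * exp (t • Aᴴ))).im = 0 :=
          fun t => ((Complex.nonneg_iff.mp (hnn t)).2).symm
        have : (fun t : ℝ => RCLike.im (K := ℂ) (Lx (exp (t • A) * Q * exp (t • Aᴴ))))
            = fun _ => (0:ℝ) := by
          funext t
          simpa using hzero t
        rw [this, integral_zero]

/-- **Integral solution of the Lyapunov equation.**
If `A` is Hurwitz then the improper integral `P = ∫₀^∞ exp(tA) Q exp(tAᴴ) dt` converges,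
`P` satisfies the Lyapunov equation `A P + P Aᴴ + Q = 0`, and if `Q` is positive semidefinite
then so is `P`. -/
theorem lyapunov_integral_solution {n : ℕ} (A Q : Matrix (Fin n) (Fin n) ℂ)
    (hA : A.IsHurwitz) :
    @IntegrableOn ℝ (Matrix (Fin n) (Fin n) ℂ) _ _ SeminormedAddGroup.toContinuousENorm
      (fun t : ℝ => exp (t • A) * Q * exp (t • Aᴴ)) (Set.Ioi 0) volume ∧
    A * (∫ t in Set.Ioi (0 : ℝ), exp (t • A) * Q * exp (t • Aᴴ)) +
      (∫ t in Set.Ioi (0 : ℝ), exp (t • A) * Q * exp (t • Aᴴ)) * Aᴴ + Q = 0 ∧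
    (Q.PosSemidef →
      (∫ t in Set.Ioi (0 : ℝ), exp (t • A) * Q * exp (t • Aᴴ)).PosSemidef) := by
  exact lyapunov_integral_solution' A Q hA
end

section
/- Let A be an n×n complex Hurwitz matrix and Q an n×n complex matrix. If P₁ and P₂ are n×n complex matrices both satisfying A·X + X·Aᴴ + Q = 0, then P₁ = P₂. That is, the Lyapunov equation associated with a Hurwitz matrix has at most one solution. -/
open Matrix

open Polynomial

lemma mem_spectrum_iff_eval {m : Type*} [Fintype m] [DecidableEq m]
    (M : Matrix m m ℂ) (μ : ℂ) :
    μ ∈ spectrum ℂ M ↔ M.charpoly.eval μ = 0 := by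
  rw [spectrum.mem_iff, Matrix.isUnit_iff_isUnit_det, isUnit_iff_ne_zero, not_not]
  have : M.charpoly.eval μ = ((charmatrix M).map (eval μ)).det :=
    RingHom.map_det (evalRingHom μ) _
  rw [this]
  congr! 2
  ext i j
  by_cases h : i = j <;>
    simp [h, charmatrix_apply, Matrix.algebraMap_matrix_apply, Matrix.diagonal_apply]

lemma spec_negAH {n : ℕ} {A : Matrix (Fin n) (Fin n) ℂ} (hA : A.IsHurwitz)
    {μ : ℂ} (hμ : μ ∈ spectrum ℂ (-Aᴴ)) : 0 < μ.re := by
  rw [spectrum.mem_iff, Matrix.isUnit_iff_isUnit_det, isUnit_iff_ne_zero, not_not] at hμ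
  have e1 : algebraMap ℂ (Matrix (Fin n) (Fin n) ℂ) μ - (-Aᴴ)
      = (algebraMap ℂ (Matrix (Fin n) (Fin n) ℂ) ((starRingEnd ℂ) μ) + A)ᴴ := by
    ext i j
    rcases eq_or_ne i j with h | h
    · simp [Matrix.algebraMap_matrix_apply, h, Matrix.conjTranspose_apply]
    · simp [Matrix.algebraMap_matrix_apply, h, Ne.symm h, Matrix.conjTranspose_apply]
  rw [e1, Matrix.det_conjTranspose, star_eq_zero] at hμ
  have key : (-(starRingEnd ℂ) μ) ∈ spectrum ℂ A := by
    rw [spectrum.mem_iff, Matrix.isUnit_iff_isUnit_det, isUnit_iff_ne_zero, not_not]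
    have e2 : algebraMap ℂ (Matrix (Fin n) (Fin n) ℂ) (-(starRingEnd ℂ) μ) - A
        = -(algebraMap ℂ (Matrix (Fin n) (Fin n) ℂ) ((starRingEnd ℂ) μ) + A) := by
      rw [map_neg, neg_add, ← sub_eq_add_neg]
    rw [e2, Matrix.det_neg, hμ, mul_zero]
  have h1 := hA _ key
  have h2 : (-(starRingEnd ℂ) μ).re = -μ.re := by simp
  linarith [h2 ▸ h1]

/-- **Uniqueness of solutions of the Lyapunov equation for a Hurwitz matrix.**
If `A` is Hurwitz and `P₁`, `P₂` both satisfy `A X + X Aᴴ + Q = 0`, then `P₁ = P₂`. -/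
theorem lyapunov_solution_unique {n : ℕ} (A Q P₁ P₂ : Matrix (Fin n) (Fin n) ℂ)
    (hA : A.IsHurwitz)
    (h₁ : A * P₁ + P₁ * Aᴴ + Q = 0)
    (h₂ : A * P₂ + P₂ * Aᴴ + Q = 0) :
    P₁ = P₂ := by
  rcases Nat.eq_zero_or_pos n with rfl | hn
  · exact Subsingleton.elim _ _
  set X := P₁ - P₂ with hXdef
  set B := -Aᴴ with hBdef
  have h : A * P₁ + P₁ * Aᴴ = A * P₂ + P₂ * Aᴴ := add_right_cancel (h₁.trans h₂.symm)
  have h0 : A * X + X * Aᴴ = 0 := by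
    simp only [hXdef, mul_sub, sub_mul]
    rw [show A * P₁ - A * P₂ + (P₁ * Aᴴ - P₂ * Aᴴ)
        = (A * P₁ + P₁ * Aᴴ) - (A * P₂ + P₂ * Aᴴ) by abel, h, sub_self]
  have hX : A * X = X * B := by
    rw [hBdef, mul_neg]
    exact eq_neg_of_add_eq_zero_left h0
  have hpow : ∀ k : ℕ, A ^ k * X = X * B ^ k := by
    intro k
    induction k with
    | zero => simp
    | succ k ih =>
        rw [pow_succ, pow_succ, mul_assoc, hX, ← mul_assoc, ih, mul_assoc]
  have key : ∀ p : ℂ[X], (aeval A p) * X = X * (aeval B p) := by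
    intro p
    induction p using Polynomial.induction_on with
    | C c => rw [aeval_C, aeval_C, Algebra.commutes]
    | add p q hp hq => rw [map_add, map_add, add_mul, mul_add, hp, hq]
    | monomial k c _ =>
        rw [_root_.map_mul, _root_.map_mul, aeval_C, aeval_C, aeval_X_pow, aeval_X_pow,
          mul_assoc, hpow (k + 1), ← mul_assoc, Algebra.commutes, mul_assoc]
  have hCH := key A.charpoly
  rw [Matrix.aeval_self_charpoly, zero_mul] at hCH
  have hunit : IsUnit (aeval B A.charpoly) := by
    by_contra hcon
    have h0' : (0 : ℂ) ∈ spectrum ℂ (aeval B A.charpoly) := by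
      rwa [spectrum.zero_mem_iff]
    have hne : (spectrum ℂ B).Nonempty := by
      obtain ⟨μ, hμ⟩ := IsAlgClosed.exists_root B.charpoly
        (by rw [Matrix.charpoly_degree_eq_dim, Fintype.card_fin]; exact_mod_cast hn.ne')
      exact ⟨μ, (mem_spectrum_iff_eval B μ).mpr hμ⟩
    rw [spectrum.map_polynomial_aeval_of_nonempty B A.charpoly hne] at h0'
    obtain ⟨μ, hμB, hμ0⟩ := h0'
    have h1 : μ.re < 0 := hA μ ((mem_spectrum_iff_eval A μ).mpr hμ0)
    have h2 : 0 < μ.re := spec_negAH hA (hBdef ▸ hμB)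
    linarith
  obtain ⟨u, hu⟩ := hunit
  have hX0 : X = 0 := by
    calc X = X * (↑u * ↑u⁻¹) := by rw [Units.mul_inv, mul_one]
      _ = (X * ↑u) * ↑u⁻¹ := by rw [mul_assoc]
      _ = 0 := by rw [hu, ← hCH, zero_mul]
  exact sub_eq_zero.mp hX0
end
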